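/- The majority function MAJ : {0,1}^n × {0,1}^n → {0,1}, MAJ(x,y) = 1 if and only if Σ_i x_i y_i ≥ ⌈n/2⌉, can be computed in the garden-hose model with (n+2)² pipes: GH(MAJ) ≤ (n+2)². -/

import Mathlib

/-- A partial matching on the vertex type `V`, encoded by a partner function:
`m i = some j` means that there is an edge between `i` and `j`;
the graph `{ {i,j} | m i = some j }` then has maximum degree at most `1`
and no self-loops. -/
def IsPartialMatching {V : Type*} (m : V → Option V) : Prop :=
  ∀ i j, m i = some j → i ≠ j ∧ m j = some i

/-- The position of the water in a garden-hose game with `s` pipes: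
`atAlice i` (resp. `atBob i`) means the water has just arrived at Alice's
(resp. Bob's) end of pipe `i`; `exitA` / `exitB` mean the water has exited
on Alice's / Bob's side, i.e. the maximal path starting at the tap has ended
in `A∘` / in `B`. -/
inductive GHState (s : ℕ) where
  | atAlice : Fin s → GHState s
  | atBob : Fin s → GHState s
  | exitA : GHState s
  | exitB : GHState s
  deriving DecidableEq

/-- Vertex `k` of `A∘ = {0, 1, ..., s}` viewed as a pipe: vertex `0` is the water
tap (no pipe), and vertex `i + 1` is Alice's end of pipe `i`. -/
def toPipe {s : ℕ} (k : Fin (s + 1)) : Option (Fin s) :=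
  if h : (k : ℕ) = 0 then none
  else some ⟨(k : ℕ) - 1, by have := k.isLt; omega⟩

/-- One step of the water flow, given Alice's connections `a` on `A∘ = {0,...,s}`
and Bob's connections `b` on `B = {1,...,s}` (indexed by pipes `Fin s`). -/
def ghStep {s : ℕ} (a : Fin (s + 1) → Option (Fin (s + 1)))
    (b : Fin s → Option (Fin s)) : GHState s → GHState s
  | GHState.atAlice i =>
    match a i.succ with
    | none => GHState.exitA
    | some k =>
      match toPipe k with
      | none => GHState.exitA
      | some p => GHState.atBob p
  | GHState.atBob i =>
    match b i with
    | none => GHState.exitB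
    | some j => GHState.atAlice j
  | GHState.exitA => GHState.exitA
  | GHState.exitB => GHState.exitB

/-- The start of the water flow: the tap (vertex `0` of `A∘`) is connected by
Alice to at most one pipe. -/
def ghStart {s : ℕ} (a : Fin (s + 1) → Option (Fin (s + 1))) : GHState s :=
  match a 0 with
  | none => GHState.exitA
  | some k =>
    match toPipe k with
    | none => GHState.exitA
    | some p => GHState.atBob p

/-- The endpoint of the maximal path `π(x,y)` starting at the tap: since the graph
has maximum degree `2` and the path is simple, it is reached after at most
`2s + 2` steps. -/
def ghResult {s : ℕ} (a : Fin (s + 1) → Option (Fin (s + 1)))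
    (b : Fin s → Option (Fin s)) : GHState s :=
  (ghStep a b)^[2 * s + 2] (ghStart a)

/-- A garden-hose game of size `s` on inputs `{0,1}^n × {0,1}^n`: for every input
`x` Alice chooses a partial matching `EA x` on `A∘ = {0,1,…,s}` and for every
input `y` Bob chooses a partial matching `EB y` on `B = {1,…,s}`. -/
structure GHGame (n s : ℕ) where
  EA : (Fin n → Bool) → Fin (s + 1) → Option (Fin (s + 1))
  EB : (Fin n → Bool) → Fin s → Option (Fin s)
  matchA : ∀ x, IsPartialMatching (EA x)
  matchB : ∀ y, IsPartialMatching (EB y)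

/-- Where the water exits on input `(x, y)`. -/
def GHGame.run {n s : ℕ} (G : GHGame n s) (x y : Fin n → Bool) : GHState s :=
  ghResult (G.EA x) (G.EB y)

/-- The game `G` computes `f` if for all inputs the maximal path from the tap ends
in `A∘` whenever `f x y = 0` (water exits on Alice's side) and in `B` whenever
`f x y = 1` (water exits on Bob's side). -/
def GHGame.Computes {n s : ℕ} (G : GHGame n s)
    (f : (Fin n → Bool) → (Fin n → Bool) → Bool) : Prop :=
  ∀ x y, G.run x y = if f x y then GHState.exitB else GHState.exitA

/-- The garden-hose complexity of `f`: the minimal number of pipes of a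
garden-hose game computing `f`. -/
noncomputable def GH {n : ℕ} (f : (Fin n → Bool) → (Fin n → Bool) → Bool) : ℕ :=
  sInf {s : ℕ | ∃ G : GHGame n s, G.Computes f}

/-- The majority function: `MAJ x y = 1` iff `Σ_i x_i y_i ≥ ⌈n/2⌉`. -/
def MAJfun (n : ℕ) (x y : Fin n → Bool) : Bool :=
  decide ((n + 1) / 2 ≤ (Finset.univ.filter fun i => x i = true ∧ y i = true).card)


namespace GHMaj

inductive Pt where
  | tap : Pt
  | lvl (t c : ℕ) (e : Bool) : Pt
  | ret (c : ℕ) (e : Bool) : Pt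
  | junk (k : ℕ) : Pt
deriving DecidableEq

def encP (n : ℕ) : Pt → ℕ
  | .tap => (n+2)^2
  | .lvl t c e => if e then (n+2)*t + c else (n+2)*c + (t+1)
  | .ret c e => (n+2)*(if e then n else n+1) + c
  | .junk k => k

def decP (n p : ℕ) : Pt :=
  if p / (n+2) = n then .ret (p % (n+2)) true
  else if p / (n+2) = n+1 then .ret (p % (n+2)) false
  else if p / (n+2) < n then
    (if p % (n+2) ≤ p / (n+2) then .lvl (p / (n+2)) (p % (n+2)) true
     else if p % (n+2) ≤ n then .lvl (p % (n+2) - 1) (p / (n+2)) false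
     else .junk p)
  else .junk p

def Valid (n : ℕ) : Pt → Prop
  | .tap => True
  | .lvl t c _ => c ≤ t ∧ t < n
  | .ret c _ => c < n + 2
  | .junk k => k < (n+2)^2 ∧ decP n k = .junk k

@[simp] lemma encP_lvl_true (n t c : ℕ) : encP n (.lvl t c true) = (n+2)*t + c := rfl
@[simp] lemma encP_lvl_false (n t c : ℕ) : encP n (.lvl t c false) = (n+2)*c + (t+1) := rfl
@[simp] lemma encP_ret_true (n c : ℕ) : encP n (.ret c true) = (n+2)*n + c := rfl
@[simp] lemma encP_ret_false (n c : ℕ) : encP n (.ret c false) = (n+2)*(n+1) + c := rfl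
@[simp] lemma encP_junk (n k : ℕ) : encP n (.junk k) = k := rfl

lemma decP_eq (n a b : ℕ) (hb : b < n+2) :
    decP n ((n+2)*a + b) =
      if a = n then .ret b true
      else if a = n+1 then .ret b false
      else if a < n then
        (if b ≤ a then .lvl a b true
         else if b ≤ n then .lvl (b-1) a false else .junk ((n+2)*a + b))
      else .junk ((n+2)*a + b) := by
  have hd : ((n+2)*a + b) / (n+2) = a := by
    rw [Nat.mul_add_div (by omega), Nat.div_eq_of_lt hb, Nat.add_zero]
  have hm : ((n+2)*a + b) % (n+2) = b := by
    rw [Nat.mul_add_mod, Nat.mod_eq_of_lt hb]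
  simp only [decP, hd, hm]

lemma encP_decP (n p : ℕ) : encP n (decP n p) = p := by
  obtain ⟨a, b, hb, rfl⟩ : ∃ a b, b < n+2 ∧ p = (n+2)*a + b :=
    ⟨_, _, Nat.mod_lt _ (by omega), (Nat.div_add_mod p (n+2)).symm⟩
  rw [decP_eq n a b hb]
  split_ifs with h1 h2 h3 h4 h5
  · rw [encP_ret_true, h1]
  · rw [encP_ret_false, h2]
  · rw [encP_lvl_true]
  · rw [encP_lvl_false, Nat.sub_add_cancel (show 1 ≤ b by omega)]
  · rfl
  · rfl

lemma decP_ne_tap (n p : ℕ) : decP n p ≠ .tap := by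
  unfold decP
  split_ifs <;> simp

lemma valid_decP (n p : ℕ) (hp : p < (n+2)^2) : Valid n (decP n p) := by
  obtain ⟨a, b, hb, rfl⟩ : ∃ a b, b < n+2 ∧ p = (n+2)*a + b :=
    ⟨_, _, Nat.mod_lt _ (by omega), (Nat.div_add_mod p (n+2)).symm⟩
  rw [decP_eq n a b hb]
  split_ifs with h1 h2 h3 h4 h5
  · exact hb
  · exact hb
  · exact ⟨h4, h3⟩
  · refine ⟨by omega, by omega⟩
  · exact ⟨hp, by rw [decP_eq n a b hb, if_neg h1, if_neg h2, if_pos h3, if_neg h4, if_neg h5]⟩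
  · exact ⟨hp, by rw [decP_eq n a b hb, if_neg h1, if_neg h2, if_neg h3]⟩

lemma decP_encP (n : ℕ) {w : Pt} (h : Valid n w) (hw : w ≠ .tap) : decP n (encP n w) = w := by
  cases w with
  | tap => exact absurd rfl hw
  | lvl t c e =>
    obtain ⟨hc, ht⟩ := h
    cases e with
    | true =>
      rw [encP_lvl_true, decP_eq n t c (by omega), if_neg (by omega), if_neg (by omega),
        if_pos ht, if_pos hc]
    | false =>
      rw [encP_lvl_false, decP_eq n c (t+1) (by omega), if_neg (by omega), if_neg (by omega),
        if_pos (by omega), if_neg (by omega), if_pos (by omega)]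
      simp
  | ret c e =>
    have hc : c < n + 2 := h
    cases e with
    | true => rw [encP_ret_true, decP_eq n n c hc, if_pos rfl]
    | false => rw [encP_ret_false, decP_eq n (n+1) c hc, if_neg (by omega), if_pos rfl]
  | junk k => exact h.2

lemma encP_lt (n : ℕ) {w : Pt} (h : Valid n w) (hw : w ≠ .tap) : encP n w < (n+2)^2 := by
  have hsq : (n+2)^2 = (n+2)*(n+1) + (n+2) := by ring
  cases w with
  | tap => exact absurd rfl hw
  | lvl t c e =>
    obtain ⟨hc, ht⟩ := h
    have h1 : (n+2)*t ≤ (n+2)*n := Nat.mul_le_mul_left _ (by omega)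
    have h2 : (n+2)*c ≤ (n+2)*n := Nat.mul_le_mul_left _ (by omega)
    have h3 : (n+2)*n + (n+2) ≤ (n+2)*(n+1) := by ring_nf; omega
    cases e <;> simp only [encP_lvl_true, encP_lvl_false] <;> omega
  | ret c e =>
    have hc : c < n + 2 := h
    have h1 : (n+2)*(if e then n else n+1) ≤ (n+2)*(n+1) :=
      Nat.mul_le_mul_left _ (by cases e <;> simp)
    simp only [encP]; omega
  | junk k => exact h.1

lemma encP_inj (n : ℕ) {w1 w2 : Pt} (h1 : Valid n w1) (h2 : Valid n w2)
    (hw1 : w1 ≠ .tap) (hw2 : w2 ≠ .tap) (h : encP n w1 = encP n w2) : w1 = w2 := by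
  have := decP_encP n h1 hw1
  rw [h, decP_encP n h2 hw2] at this
  exact this.symm


/-! ### The routing involution -/

def pb (Z : ℕ → Bool) (t : ℕ) : Bool := if t = 0 then false else Z (t - 1)

/-- One party's routing rule, as a function on structured ports. -/
def step (n : ℕ) (al : Bool) (Z : ℕ → Bool) : Pt → Pt
  | .tap => if al then (if n = 0 then .ret 0 false else .lvl 0 0 (Z 0)) else .tap
  | .junk k => .junk k
  | .ret c e =>
      if al = true ∧ n = 0 then
        (if c = 0 ∧ e = false then .tap else .ret c e)
      else if (n - 1) % 2 = (if al = true then 1 else 0) ∧ c ≤ n - 1 ∧ n ≠ 0 then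
        (if decide ((n+1)/2 ≤ c + (if (e != pb Z (n-1)) && Z (n-1) then 1 else 0)) = al
         then .lvl (n-1) c e else .ret c e)
      else .ret c e
  | .lvl t c e =>
      if t % 2 = (if al = true then 1 else 0) then
        (if t + 1 < n then
           .lvl (t+1) (c + (if (e != pb Z t) && Z t then 1 else 0)) (Z (t+1) != (e != pb Z t))
         else if decide ((n+1)/2 ≤ c + (if (e != pb Z t) && Z t then 1 else 0)) = al
         then .ret c e else .lvl t c e)
      else
        if t = 0 then
          (if al = true ∧ c = 0 ∧ e = Z 0 then .tap else .lvl t c e)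
        else
          (if (if (e != Z t) && Z (t-1) then 1 else 0) ≤ c
              ∧ c - (if (e != Z t) && Z (t-1) then 1 else 0) ≤ t - 1 then
             .lvl (t-1) (c - (if (e != Z t) && Z (t-1) then 1 else 0)) ((e != Z t) != pb Z (t-1))
           else .lvl t c e)

lemma step_tap (n : ℕ) (al : Bool) (Z : ℕ → Bool) :
    step n al Z .tap = if al then (if n = 0 then .ret 0 false else .lvl 0 0 (Z 0)) else .tap := rfl

lemma step_junk (n : ℕ) (al : Bool) (Z : ℕ → Bool) (k : ℕ) :
    step n al Z (.junk k) = .junk k := rfl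

lemma step_ret (n : ℕ) (al : Bool) (Z : ℕ → Bool) (c : ℕ) (e : Bool) :
    step n al Z (.ret c e) =
      if al = true ∧ n = 0 then
        (if c = 0 ∧ e = false then .tap else .ret c e)
      else if (n - 1) % 2 = (if al = true then 1 else 0) ∧ c ≤ n - 1 ∧ n ≠ 0 then
        (if decide ((n+1)/2 ≤ c + (if (e != pb Z (n-1)) && Z (n-1) then 1 else 0)) = al
         then .lvl (n-1) c e else .ret c e)
      else .ret c e := rfl

lemma step_lvl (n : ℕ) (al : Bool) (Z : ℕ → Bool) (t c : ℕ) (e : Bool) :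
    step n al Z (.lvl t c e) =
      if t % 2 = (if al = true then 1 else 0) then
        (if t + 1 < n then
           .lvl (t+1) (c + (if (e != pb Z t) && Z t then 1 else 0)) (Z (t+1) != (e != pb Z t))
         else if decide ((n+1)/2 ≤ c + (if (e != pb Z t) && Z t then 1 else 0)) = al
         then .ret c e else .lvl t c e)
      else
        if t = 0 then
          (if al = true ∧ c = 0 ∧ e = Z 0 then .tap else .lvl t c e)
        else
          (if (if (e != Z t) && Z (t-1) then 1 else 0) ≤ c
              ∧ c - (if (e != Z t) && Z (t-1) then 1 else 0) ≤ t - 1 then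
             .lvl (t-1) (c - (if (e != Z t) && Z (t-1) then 1 else 0)) ((e != Z t) != pb Z (t-1))
           else .lvl t c e) := rfl

lemma bne_bne_right (a b : Bool) : ((a != b) != b) = a := by cases a <;> cases b <;> rfl
lemma bne_bne_swap (a b : Bool) : ((a != b) != a) = b := by cases a <;> cases b <;> rfl
lemma bne_left_swap (a b : Bool) : (a != (b != a)) = b := by cases a <;> cases b <;> rfl

lemma par_succ (al : Bool) {t : ℕ} (h : t % 2 = (if al = true then 1 else 0)) :
    ¬((t+1) % 2 = (if al = true then 1 else 0)) := by
  cases al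
  · rw [if_neg (by decide)] at h ⊢; omega
  · rw [if_pos rfl] at h ⊢; omega

lemma par_pred (al : Bool) {t : ℕ} (h : ¬ t % 2 = (if al = true then 1 else 0)) (ht : t ≠ 0) :
    (t-1) % 2 = (if al = true then 1 else 0) := by
  cases al
  · rw [if_neg (by decide)] at h ⊢; omega
  · rw [if_pos rfl] at h ⊢; omega

lemma ite01_le_one (b : Bool) : (if b = true then 1 else 0) ≤ 1 := by
  cases b <;> simp

lemma step_valid (n : ℕ) (al : Bool) (Z : ℕ → Bool) {w : Pt} (h : Valid n w) :
    Valid n (step n al Z w) := by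
  cases w with
  | tap =>
    rw [step_tap]
    by_cases hal : al = true
    · rw [if_pos hal]
      by_cases hn : n = 0
      · rw [if_pos hn]; exact (by omega : (0:ℕ) < n + 2)
      · rw [if_neg hn]; exact ⟨le_refl 0, by omega⟩
    · rw [if_neg hal]; trivial
  | junk k => exact h
  | ret c e =>
    have hc : c < n + 2 := h
    rw [step_ret]
    by_cases h1 : al = true ∧ n = 0
    · rw [if_pos h1]
      by_cases h2 : c = 0 ∧ e = false
      · rw [if_pos h2]; trivial
      · rw [if_neg h2]; exact hc
    · rw [if_neg h1]
      by_cases h2 : (n - 1) % 2 = (if al = true then 1 else 0) ∧ c ≤ n - 1 ∧ n ≠ 0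
      · rw [if_pos h2]
        by_cases h3 : decide ((n+1)/2 ≤ c + (if (e != pb Z (n-1)) && Z (n-1) then 1 else 0)) = al
        · rw [if_pos h3]; exact ⟨h2.2.1, by omega⟩
        · rw [if_neg h3]; exact hc
      · rw [if_neg h2]; exact hc
  | lvl t c e =>
    obtain ⟨hc, ht⟩ := h
    rw [step_lvl]
    by_cases h1 : t % 2 = (if al = true then 1 else 0)
    · rw [if_pos h1]
      by_cases h2 : t + 1 < n
      · rw [if_pos h2]
        have := ite01_le_one ((e != pb Z t) && Z t)
        exact ⟨by omega, h2⟩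
      · rw [if_neg h2]
        by_cases h3 : decide ((n+1)/2 ≤ c + (if (e != pb Z t) && Z t then 1 else 0)) = al
        · rw [if_pos h3]; exact (by omega : c < n + 2)
        · rw [if_neg h3]; exact ⟨hc, ht⟩
    · rw [if_neg h1]
      by_cases h2 : t = 0
      · rw [if_pos h2]
        by_cases h3 : al = true ∧ c = 0 ∧ e = Z 0
        · rw [if_pos h3]; trivial
        · rw [if_neg h3]; exact ⟨hc, ht⟩
      · rw [if_neg h2]
        by_cases h3 : (if (e != Z t) && Z (t-1) then 1 else 0) ≤ c
            ∧ c - (if (e != Z t) && Z (t-1) then 1 else 0) ≤ t - 1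
        · rw [if_pos h3]; exact ⟨h3.2, by omega⟩
        · rw [if_neg h3]; exact ⟨hc, ht⟩

lemma step_ne_tap (n : ℕ) (Z : ℕ → Bool) {w : Pt} (hw : w ≠ .tap) :
    step n false Z w ≠ .tap := by
  cases w with
  | tap => exact absurd rfl hw
  | junk k => rw [step_junk]; exact fun h => Pt.noConfusion h
  | ret c e =>
    rw [step_ret, if_neg (by simp)]
    by_cases h2 : (n - 1) % 2 = (if false = true then 1 else 0) ∧ c ≤ n - 1 ∧ n ≠ 0
    · rw [if_pos h2]
      by_cases h3 : decide ((n+1)/2 ≤ c + (if (e != pb Z (n-1)) && Z (n-1) then 1 else 0)) = false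
      · rw [if_pos h3]; exact fun h => Pt.noConfusion h
      · rw [if_neg h3]; exact fun h => Pt.noConfusion h
    · rw [if_neg h2]; exact fun h => Pt.noConfusion h
  | lvl t c e =>
    rw [step_lvl]
    by_cases h1 : t % 2 = (if false = true then 1 else 0)
    · rw [if_pos h1]
      by_cases h2 : t + 1 < n
      · rw [if_pos h2]; exact fun h => Pt.noConfusion h
      · rw [if_neg h2]
        by_cases h3 : decide ((n+1)/2 ≤ c + (if (e != pb Z t) && Z t then 1 else 0)) = false
        · rw [if_pos h3]; exact fun h => Pt.noConfusion h
        · rw [if_neg h3]; exact fun h => Pt.noConfusion h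
    · rw [if_neg h1]
      by_cases h2 : t = 0
      · rw [if_pos h2, if_neg (by simp)]; exact fun h => Pt.noConfusion h
      · rw [if_neg h2]
        by_cases h3 : (if (e != Z t) && Z (t-1) then 1 else 0) ≤ c
            ∧ c - (if (e != Z t) && Z (t-1) then 1 else 0) ≤ t - 1
        · rw [if_pos h3]; exact fun h => Pt.noConfusion h
        · rw [if_neg h3]; exact fun h => Pt.noConfusion h

lemma step_invol (n : ℕ) (al : Bool) (Z : ℕ → Bool) {w : Pt} (h : Valid n w) :
    step n al Z (step n al Z w) = w := by
  cases w with
  | tap =>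
    rw [step_tap]
    by_cases hal : al = true
    · rw [if_pos hal]
      by_cases hn : n = 0
      · rw [if_pos hn, step_ret, if_pos ⟨hal, hn⟩, if_pos ⟨rfl, rfl⟩]
      · rw [if_neg hn, step_lvl,
          if_neg (by cases al <;> simp_all),
          if_pos rfl, if_pos ⟨hal, rfl, rfl⟩]
    · rw [if_neg hal, step_tap, if_neg hal]
  | junk k => rw [step_junk, step_junk]
  | ret c e =>
    have hc : c < n + 2 := h
    rw [step_ret]
    by_cases h1 : al = true ∧ n = 0
    · rw [if_pos h1]
      by_cases h2 : c = 0 ∧ e = false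
      · rw [if_pos h2, step_tap, if_pos h1.1, if_pos h1.2, h2.1, h2.2]
      · rw [if_neg h2, step_ret, if_pos h1, if_neg h2]
    · rw [if_neg h1]
      by_cases h2 : (n - 1) % 2 = (if al = true then 1 else 0) ∧ c ≤ n - 1 ∧ n ≠ 0
      · rw [if_pos h2]
        by_cases h3 : decide ((n+1)/2 ≤ c + (if (e != pb Z (n-1)) && Z (n-1) then 1 else 0)) = al
        · rw [if_pos h3, step_lvl, if_pos h2.1, if_neg (by omega : ¬ (n-1) + 1 < n), if_pos h3]
        · rw [if_neg h3, step_ret, if_neg h1, if_pos h2, if_neg h3]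
      · rw [if_neg h2, step_ret, if_neg h1, if_neg h2]
  | lvl t c e =>
    obtain ⟨hc, ht⟩ := h
    rw [step_lvl]
    by_cases h1 : t % 2 = (if al = true then 1 else 0)
    · rw [if_pos h1]
      by_cases h2 : t + 1 < n
      · rw [if_pos h2, step_lvl, if_neg (par_succ al h1), if_neg (by omega : ¬ t + 1 = 0)]
        simp only [Nat.add_sub_cancel, bne_bne_swap]
        rw [if_pos ⟨Nat.le_add_left _ _, hc⟩, bne_bne_right]
      · rw [if_neg h2]
        by_cases h3 : decide ((n+1)/2 ≤ c + (if (e != pb Z t) && Z t then 1 else 0)) = al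
        · rw [if_pos h3]
          have htn : n - 1 = t := by omega
          rw [step_ret, if_neg (by intro hh; omega), htn, if_pos ⟨h1, hc, by omega⟩, if_pos h3]
        · rw [if_neg h3, step_lvl, if_pos h1, if_neg h2, if_neg h3]
    · rw [if_neg h1]
      by_cases h2 : t = 0
      · rw [if_pos h2]
        by_cases h3 : al = true ∧ c = 0 ∧ e = Z 0
        · rw [if_pos h3, step_tap, if_pos h3.1, if_neg (by omega : ¬ n = 0), h2, h3.2.1, h3.2.2]
        · rw [if_neg h3, step_lvl, if_neg h1, if_pos h2, if_neg h3]
      · rw [if_neg h2]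
        by_cases h3 : (if (e != Z t) && Z (t-1) then 1 else 0) ≤ c
            ∧ c - (if (e != Z t) && Z (t-1) then 1 else 0) ≤ t - 1
        · rw [if_pos h3]
          obtain ⟨h3a, h3b⟩ := h3
          rw [step_lvl, if_pos (par_pred al h1 h2), if_pos (by omega : t - 1 + 1 < n)]
          simp only [bne_bne_right, Nat.sub_add_cancel (by omega : 1 ≤ t)]
          rw [Nat.sub_add_cancel h3a, bne_left_swap]
        · rw [if_neg h3, step_lvl, if_neg h1, if_neg h2, if_neg h3]


/-! ### Vertex-level encoding (Alice's side has the tap as vertex 0) -/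

def encV (n : ℕ) : Pt → ℕ
  | .tap => 0
  | w => encP n w + 1

def decV (n v : ℕ) : Pt := if v = 0 then .tap else decP n (v - 1)

lemma encV_ne_tap (n : ℕ) {w : Pt} (hw : w ≠ .tap) : encV n w = encP n w + 1 := by
  cases w with
  | tap => exact absurd rfl hw
  | lvl t c e => rfl
  | ret c e => rfl
  | junk k => rfl

lemma decV_encV (n : ℕ) {w : Pt} (h : Valid n w) : decV n (encV n w) = w := by
  by_cases hw : w = .tap
  · subst hw; rfl
  · rw [encV_ne_tap n hw, decV, if_neg (by omega), Nat.add_sub_cancel, decP_encP n h hw]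

lemma encV_decV (n v : ℕ) : encV n (decV n v) = v := by
  rw [decV]
  by_cases h0 : v = 0
  · rw [if_pos h0, h0]; rfl
  · rw [if_neg h0, encV_ne_tap n (decP_ne_tap n (v-1)), encP_decP]
    omega

lemma valid_decV (n v : ℕ) (hv : v < (n+2)^2 + 1) : Valid n (decV n v) := by
  rw [decV]
  by_cases h0 : v = 0
  · rw [if_pos h0]; trivial
  · rw [if_neg h0]; exact valid_decP n (v-1) (by omega)

lemma encV_lt (n : ℕ) {w : Pt} (h : Valid n w) : encV n w < (n+2)^2 + 1 := by
  by_cases hw : w = .tap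
  · subst hw; simp [encV]
  · rw [encV_ne_tap n hw]
    have := encP_lt n h hw
    omega

/-! ### The two players' partner functions -/

/-- the bit string of a player, as a total function on `ℕ`. -/
def bits (n : ℕ) (x : Fin n → Bool) (t : ℕ) : Bool := if h : t < n then x ⟨t, h⟩ else false

def aliceFun (n : ℕ) (x : Fin n → Bool) : Fin ((n+2)^2 + 1) → Option (Fin ((n+2)^2 + 1)) :=
  fun v =>
    let w := encV n (step n true (bits n x) (decV n v.val))
    if h : w ≠ v.val ∧ w < (n+2)^2 + 1 then some ⟨w, h.2⟩ else none

def bobFun (n : ℕ) (y : Fin n → Bool) : Fin ((n+2)^2) → Option (Fin ((n+2)^2)) :=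
  fun p =>
    let w := encP n (step n false (bits n y) (decP n p.val))
    if h : w ≠ p.val ∧ w < (n+2)^2 then some ⟨w, h.2⟩ else none

lemma aliceFun_matching (n : ℕ) (x : Fin n → Bool) : IsPartialMatching (aliceFun n x) := by
  intro i j hij
  rw [aliceFun] at hij
  split at hij
  case isFalse => exact absurd hij (by simp)
  case isTrue h =>
    have hj : (j : ℕ) = encV n (step n true (bits n x) (decV n i.val)) := by
      have := congrArg (fun o => Option.map Fin.val o) hij
      simpa using this.symm
    have hvi : Valid n (decV n i.val) := valid_decV n i.val i.isLt
    constructor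
    · intro hij'
      exact h.1 (by rw [← hj, hij'])
    · rw [aliceFun]
      have hdec : decV n j.val = step n true (bits n x) (decV n i.val) := by
        rw [hj, decV_encV n (step_valid n true (bits n x) hvi)]
      have hstep : encV n (step n true (bits n x) (decV n j.val)) = i.val := by
        rw [hdec, step_invol n true (bits n x) hvi, encV_decV]
      rw [dif_pos ?_]
      · congr 1
        exact Fin.ext hstep
      · refine ⟨by rw [hstep]; intro hh; exact h.1 (by rw [← hj, hh]), by rw [hstep]; exact i.isLt⟩

lemma bobFun_matching (n : ℕ) (y : Fin n → Bool) : IsPartialMatching (bobFun n y) := by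
  intro i j hij
  rw [bobFun] at hij
  split at hij
  case isFalse => exact absurd hij (by simp)
  case isTrue h =>
    have hj : (j : ℕ) = encP n (step n false (bits n y) (decP n i.val)) := by
      have := congrArg (fun o => Option.map Fin.val o) hij
      simpa using this.symm
    have hvi : Valid n (decP n i.val) := valid_decP n i.val i.isLt
    constructor
    · intro hij'
      exact h.1 (by rw [← hj, hij'])
    · rw [bobFun]
      have hdec : decP n j.val = step n false (bits n y) (decP n i.val) := by
        rw [hj, decP_encP n (step_valid n false (bits n y) hvi)
          (step_ne_tap n (bits n y) (decP_ne_tap n i.val))]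
      have hstep : encP n (step n false (bits n y) (decP n j.val)) = i.val := by
        rw [hdec, step_invol n false (bits n y) hvi, encP_decP]
      rw [dif_pos ?_]
      · congr 1
        exact Fin.ext hstep
      · refine ⟨by rw [hstep]; intro hh; exact h.1 (by rw [← hj, hh]), by rw [hstep]; exact i.isLt⟩


/-! ### The trajectory of the water -/

def sb (n : ℕ) (x y : Fin n → Bool) (t : ℕ) : Bool :=
  if t % 2 = 0 then bits n x t else bits n y t

def eb (n : ℕ) (x y : Fin n → Bool) (t : ℕ) : Bool :=
  sb n x y t != (if t = 0 then false else sb n x y (t-1))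

def cnt (n : ℕ) (x y : Fin n → Bool) (t : ℕ) : ℕ :=
  ((Finset.range t).filter (fun i => bits n x i && bits n y i)).card

def Port (n : ℕ) (x y : Fin n → Bool) (t : ℕ) : Pt :=
  .lvl t (cnt n x y t) (eb n x y t)

section Run

variable {n : ℕ} {x y : Fin n → Bool}

lemma rBob : (if false = true then (1:ℕ) else 0) = 0 := rfl
lemma rAl : (if true = true then (1:ℕ) else 0) = 1 := rfl

lemma cnt_zero : cnt n x y 0 = 0 := by simp [cnt]

lemma cnt_le (t : ℕ) : cnt n x y t ≤ t := by
  calc ((Finset.range t).filter _).card ≤ (Finset.range t).card := Finset.card_filter_le _ _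
  _ = t := Finset.card_range t

lemma cnt_succ (t : ℕ) :
    cnt n x y (t+1) = cnt n x y t + (if bits n x t && bits n y t then 1 else 0) := by
  rw [cnt, cnt, Finset.range_add_one, Finset.filter_insert]
  split_ifs with h
  · rw [Finset.card_insert_of_notMem (by simp)]
  · rw [Nat.add_zero]

lemma valid_port (t : ℕ) (ht : t < n) : Valid n (Port n x y t) := ⟨cnt_le t, ht⟩

lemma port_ne_tap (t : ℕ) : Port n x y t ≠ .tap := fun h => Pt.noConfusion h

lemma sb_even {t : ℕ} (h : t % 2 = 0) : sb n x y t = bits n x t := if_pos h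

lemma sb_odd {t : ℕ} (h : t % 2 = 1) : sb n x y t = bits n y t := if_neg (by omega)

lemma pb_bob {t : ℕ} (h : t % 2 = 0) :
    pb (bits n y) t = (if t = 0 then false else sb n x y (t-1)) := by
  rw [pb]
  by_cases h0 : t = 0
  · rw [if_pos h0, if_pos h0]
  · rw [if_neg h0, if_neg h0, sb, if_neg (by omega)]

lemma pb_alice {t : ℕ} (h : t % 2 = 1) :
    pb (bits n x) t = (if t = 0 then false else sb n x y (t-1)) := by
  rw [pb, if_neg (by omega), if_neg (by omega), sb, if_pos (by omega)]

lemma eb_recv_bob {t : ℕ} (h : t % 2 = 0) :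
    (eb n x y t != pb (bits n y) t) = sb n x y t := by
  rw [eb, pb_bob h, bne_bne_right]

lemma eb_recv_alice {t : ℕ} (h : t % 2 = 1) :
    (eb n x y t != pb (bits n x) t) = sb n x y t := by
  rw [eb, pb_alice h, bne_bne_right]

lemma eb_zero : eb n x y 0 = bits n x 0 := by
  rw [eb, if_pos rfl, sb, if_pos rfl, Bool.bne_false]

lemma eb_succ (t : ℕ) : eb n x y (t+1) = (sb n x y (t+1) != sb n x y t) := by
  rw [eb, if_neg (by omega), Nat.add_sub_cancel]

/-- Bob's routing from the level-`t` port, `t` even. -/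
lemma step_port_bob {t : ℕ} (hte : t % 2 = 0) (ht : t < n) :
    step n false (bits n y) (Port n x y t) =
      if t + 1 < n then Port n x y (t+1)
      else if decide ((n+1)/2 ≤ cnt n x y (t+1)) = false then .ret (cnt n x y t) (eb n x y t)
      else Port n x y t := by
  rw [Port, step_lvl, if_pos (show t % 2 = _ by rw [rBob]; exact hte), eb_recv_bob hte]
  have hincr : (if (sb n x y t && bits n y t) then (1:ℕ) else 0)
      = (if bits n x t && bits n y t then 1 else 0) := by rw [sb_even hte]
  rw [hincr, ← cnt_succ]
  by_cases h2 : t + 1 < n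
  · rw [if_pos h2, if_pos h2]
    have he : (bits n y (t+1) != sb n x y t) = eb n x y (t+1) := by
      rw [eb_succ, sb_odd (show (t+1) % 2 = 1 by omega)]
    rw [he, Port]
  · rw [if_neg h2, if_neg h2]

/-- Alice's routing from the level-`t` port, `t` odd. -/
lemma step_port_alice {t : ℕ} (hto : t % 2 = 1) (ht : t < n) :
    step n true (bits n x) (Port n x y t) =
      if t + 1 < n then Port n x y (t+1)
      else if decide ((n+1)/2 ≤ cnt n x y (t+1)) = true then .ret (cnt n x y t) (eb n x y t)
      else Port n x y t := by
  rw [Port, step_lvl, if_pos (show t % 2 = _ by rw [rAl]; exact hto), eb_recv_alice hto]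
  have hincr : (if (sb n x y t && bits n x t) then (1:ℕ) else 0)
      = (if bits n x t && bits n y t then 1 else 0) := by rw [sb_odd hto, Bool.and_comm]
  rw [hincr, ← cnt_succ]
  by_cases h2 : t + 1 < n
  · rw [if_pos h2, if_pos h2]
    have he : (bits n x (t+1) != sb n x y t) = eb n x y (t+1) := by
      rw [eb_succ, sb_even (show (t+1) % 2 = 0 by omega)]
    rw [he, Port]
  · rw [if_neg h2, if_neg h2]

/-- Alice's routing from the tap. -/
lemma step_tap_alice (hn : n ≠ 0) : step n true (bits n x) .tap = Port n x y 0 := by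
  rw [step_tap, if_pos rfl, if_neg hn, Port, cnt_zero, eb_zero]

/-- Neither party moves the water out of a `ret` port it did not connect. -/
lemma step_ret_bob_self (hn1 : (n-1) % 2 = 1) (c : ℕ) (e : Bool) :
    step n false (bits n y) (.ret c e) = .ret c e := by
  rw [step_ret, if_neg (by simp), if_neg (by rw [rBob]; intro hh; omega)]

lemma step_ret_alice_self (hn1 : (n-1) % 2 = 0) (hn : n ≠ 0) (c : ℕ) (e : Bool) :
    step n true (bits n x) (.ret c e) = .ret c e := by
  rw [step_ret, if_neg (by intro hh; exact hn hh.2), if_neg (by rw [rAl]; intro hh; omega)]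

lemma step_ret_bob_self0 (hn : n = 0) (c : ℕ) (e : Bool) :
    step n false (bits n y) (.ret c e) = .ret c e := by
  rw [step_ret, if_neg (by simp), if_neg (by intro hh; exact hh.2.2 hn)]

/-! ### Evaluating the partner functions -/

lemma encV_inj {w w' : Pt} (hv : Valid n w) (hv' : Valid n w')
    (h : encV n w = encV n w') : w = w' := by
  rw [← decV_encV n hv, ← decV_encV n hv', h]

lemma aliceFun_eq_some {i : Fin ((n+2)^2+1)} {w w' : Pt}
    (hi : (i : ℕ) = encV n w) (hv : Valid n w)
    (hst : step n true (bits n x) w = w') (hne : w' ≠ w) (hv' : Valid n w') :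
    aliceFun n x i = some ⟨encV n w', encV_lt n hv'⟩ := by
  have hdec : decV n i.val = w := by rw [hi, decV_encV n hv]
  rw [aliceFun]
  simp only [hdec, hst]
  rw [dif_pos ⟨by rw [hi]; exact fun hh => hne (encV_inj hv' hv hh), encV_lt n hv'⟩]

lemma aliceFun_eq_none {i : Fin ((n+2)^2+1)} {w : Pt}
    (hi : (i : ℕ) = encV n w) (hv : Valid n w)
    (hst : step n true (bits n x) w = w) :
    aliceFun n x i = none := by
  have hdec : decV n i.val = w := by rw [hi, decV_encV n hv]
  rw [aliceFun]
  simp only [hdec, hst]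
  rw [dif_neg]
  intro hh
  exact hh.1 (by rw [hi])

lemma bobFun_eq_some {i : Fin ((n+2)^2)} {w w' : Pt}
    (hi : (i : ℕ) = encP n w) (hv : Valid n w) (hw : w ≠ .tap)
    (hst : step n false (bits n y) w = w') (hne : w' ≠ w) (hv' : Valid n w') (hw' : w' ≠ .tap) :
    bobFun n y i = some ⟨encP n w', encP_lt n hv' hw'⟩ := by
  have hdec : decP n i.val = w := by rw [hi, decP_encP n hv hw]
  rw [bobFun]
  simp only [hdec, hst]
  rw [dif_pos ⟨by
      rw [hi]
      intro hh
      exact hne (encP_inj n hv' hv hw' hw hh), encP_lt n hv' hw'⟩]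

lemma bobFun_eq_none {i : Fin ((n+2)^2)} {w : Pt}
    (hi : (i : ℕ) = encP n w) (hv : Valid n w) (hw : w ≠ .tap)
    (hst : step n false (bits n y) w = w) :
    bobFun n y i = none := by
  have hdec : decP n i.val = w := by rw [hi, decP_encP n hv hw]
  rw [bobFun]
  simp only [hdec, hst]
  rw [dif_neg]
  intro hh
  exact hh.1 (by rw [hi])

/-! ### Single moves of the water -/

lemma toPipe_succ {s : ℕ} (p : ℕ) (h : p < s) (h2 : p + 1 < s + 1) :
    toPipe (⟨p+1, h2⟩ : Fin (s+1)) = some ⟨p, h⟩ := by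
  rw [toPipe, dif_neg (by simp)]
  simp

lemma ghStep_atAlice_some {s : ℕ} {a : Fin (s+1) → Option (Fin (s+1))}
    {b : Fin s → Option (Fin s)} {i : Fin s} {k : Fin (s+1)} {p : Fin s}
    (hk : a i.succ = some k) (hp : toPipe k = some p) :
    ghStep a b (.atAlice i) = .atBob p := by
  simp [ghStep, hk, hp]

lemma ghStep_atAlice_none {s : ℕ} {a : Fin (s+1) → Option (Fin (s+1))}
    {b : Fin s → Option (Fin s)} {i : Fin s} (hk : a i.succ = none) :
    ghStep a b (.atAlice i) = .exitA := by
  simp [ghStep, hk]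

lemma ghStep_atBob_some {s : ℕ} {a : Fin (s+1) → Option (Fin (s+1))}
    {b : Fin s → Option (Fin s)} {i j : Fin s} (hk : b i = some j) :
    ghStep a b (.atBob i) = .atAlice j := by
  simp [ghStep, hk]

lemma ghStep_atBob_none {s : ℕ} {a : Fin (s+1) → Option (Fin (s+1))}
    {b : Fin s → Option (Fin s)} {i : Fin s} (hk : b i = none) :
    ghStep a b (.atBob i) = .exitB := by
  simp [ghStep, hk]

lemma ghStart_some {s : ℕ} {a : Fin (s+1) → Option (Fin (s+1))} {k : Fin (s+1)} {p : Fin s}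
    (hk : a 0 = some k) (hp : toPipe k = some p) :
    ghStart a = .atBob p := by
  simp [ghStart, hk, hp]

lemma iterate_fix {α : Type*} {f : α → α} {z e : α} (he : f e = e) {k N : ℕ}
    (hk : k ≤ N) (h : f^[k] z = e) : f^[N] z = e := by
  rw [show N = (N-k) + k by omega, Function.iterate_add_apply, h,
    Function.iterate_fixed he]

end Run

section Traj

variable {n : ℕ} {x y : Fin n → Bool}

lemma aliceFun_eq_some' {i : Fin ((n+2)^2+1)} {w w' : Pt}
    (hi : (i : ℕ) = encV n w) (hv : Valid n w)
    (hst : step n true (bits n x) w = w') (hne : w' ≠ w) (hv' : Valid n w') (hw' : w' ≠ .tap) :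
    aliceFun n x i = some ⟨encP n w' + 1, by have := encP_lt n hv' hw'; omega⟩ := by
  rw [aliceFun_eq_some hi hv hst hne hv']
  exact congrArg some (Fin.ext (encV_ne_tap n hw'))

lemma port_ne_succ (t : ℕ) : Port n x y (t+1) ≠ Port n x y t := by
  simp only [Port]
  intro hh
  injection hh with h1 h2 h3
  omega

lemma run_traj (hn : n ≠ 0) (t : ℕ) (ht : t < n) :
    (ghStep (aliceFun n x) (bobFun n y))^[t] (ghStart (aliceFun n x)) =
      if t % 2 = 0
      then GHState.atBob ⟨encP n (Port n x y t), encP_lt n (valid_port t ht) (port_ne_tap t)⟩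
      else GHState.atAlice ⟨encP n (Port n x y t), encP_lt n (valid_port t ht) (port_ne_tap t)⟩ := by
  induction t with
  | zero =>
    rw [if_pos (by omega), Function.iterate_zero_apply]
    have ha : aliceFun n x 0 = some ⟨encP n (Port n x y 0) + 1, by
        have := encP_lt n (valid_port 0 (by omega)) (port_ne_tap (x := x) (y := y) 0); omega⟩ :=
      aliceFun_eq_some' (w := .tap) rfl trivial (step_tap_alice hn) (fun hh => Pt.noConfusion hh)
        (valid_port 0 (by omega)) (port_ne_tap 0)
    exact ghStart_some ha (toPipe_succ _ _ _)
  | succ t ih =>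
    have ht' : t < n := by omega
    have ihh := ih ht'
    rw [Function.iterate_succ_apply']
    by_cases hp : t % 2 = 0
    · rw [if_pos hp] at ihh
      rw [ihh, if_neg (by omega)]
      have hb : bobFun n y ⟨encP n (Port n x y t),
          encP_lt n (valid_port t ht') (port_ne_tap t)⟩ =
          some ⟨encP n (Port n x y (t+1)),
            encP_lt n (valid_port (t+1) ht) (port_ne_tap (t+1))⟩ :=
        bobFun_eq_some rfl (valid_port t ht') (port_ne_tap t)
          (by rw [step_port_bob hp ht', if_pos ht]) (port_ne_succ t)
          (valid_port (t+1) ht) (port_ne_tap (t+1))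
      rw [ghStep_atBob_some hb]
    · rw [if_neg hp] at ihh
      rw [ihh, if_pos (by omega)]
      have ha : aliceFun n x (Fin.succ ⟨encP n (Port n x y t),
            encP_lt n (valid_port t ht') (port_ne_tap t)⟩) =
          some ⟨encP n (Port n x y (t+1)) + 1, by
            have := encP_lt n (valid_port (x := x) (y := y) (t+1) ht) (port_ne_tap (x := x) (y := y) (t+1)); omega⟩ :=
        aliceFun_eq_some' (by rw [Fin.val_succ, encV_ne_tap n (port_ne_tap t)])
          (valid_port t ht')
          (by rw [step_port_alice (show t % 2 = 1 by omega) ht', if_pos ht]) (port_ne_succ t)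
          (valid_port (t+1) ht) (port_ne_tap (t+1))
      rw [ghStep_atAlice_some ha (toPipe_succ _ _ _)]

lemma cnt_n_eq : cnt n x y n = (Finset.univ.filter fun i => x i = true ∧ y i = true).card := by
  rw [cnt]
  have himg : (Finset.univ.filter fun i : Fin n => x i = true ∧ y i = true).image Fin.val
      = (Finset.range n).filter (fun i => bits n x i && bits n y i) := by
    ext t
    simp only [Finset.mem_image, Finset.mem_filter, Finset.mem_univ, true_and, Finset.mem_range]
    constructor
    · rintro ⟨i, ⟨hx, hy⟩, rfl⟩
      refine ⟨i.isLt, ?_⟩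
      simp [bits, i.isLt, hx, hy]
    · rintro ⟨ht, hb⟩
      refine ⟨⟨t, ht⟩, ?_, rfl⟩
      rw [bits, dif_pos ht, bits, dif_pos ht] at hb
      exact ⟨(Bool.and_eq_true _ _).mp hb |>.1, (Bool.and_eq_true _ _).mp hb |>.2⟩
  rw [← himg, Finset.card_image_of_injective _ Fin.val_injective]

end Traj

/-! ### The garden-hose game for majority -/

def theGame (n : ℕ) : GHGame n ((n+2)^2) :=
  ⟨aliceFun n, bobFun n, aliceFun_matching n, bobFun_matching n⟩

lemma theGame_computes (n : ℕ) : (theGame n).Computes (MAJfun n) := by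
  intro x y
  have hMAJ : MAJfun n x y = decide ((n+1)/2 ≤ cnt n x y n) := by
    rw [MAJfun, cnt_n_eq]
  show ghResult (aliceFun n x) (bobFun n y) = _
  rw [ghResult]
  have hsq : (n+2)^2 = n*n + 4*n + 4 := by ring
  have hfixA : ghStep (aliceFun n x) (bobFun n y) GHState.exitA = GHState.exitA := rfl
  have hfixB : ghStep (aliceFun n x) (bobFun n y) GHState.exitB = GHState.exitB := rfl
  by_cases hn : n = 0
  · subst hn
    have hM : MAJfun 0 x y = true := by rw [hMAJ]; simp
    rw [hM, if_pos rfl]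
    refine iterate_fix hfixB (k := 1) (by omega) ?_
    rw [Function.iterate_one]
    have hvret : Valid 0 (Pt.ret 0 false) := (by omega : (0:ℕ) < 0 + 2)
    have hlt : encP 0 (Pt.ret 0 false) < (0+2)^2 := encP_lt 0 hvret (fun hh => Pt.noConfusion hh)
    have ha : aliceFun 0 x 0 = some ⟨encP 0 (.ret 0 false) + 1, by omega⟩ :=
      aliceFun_eq_some' (w := .tap) rfl trivial (by rw [step_tap, if_pos rfl, if_pos rfl])
        (fun hh => Pt.noConfusion hh) hvret (fun hh => Pt.noConfusion hh)
    rw [ghStart_some ha (toPipe_succ _ hlt (by omega)),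
      ghStep_atBob_none (bobFun_eq_none rfl hvret (fun hh => Pt.noConfusion hh)
        (step_ret_bob_self0 rfl 0 false))]
  · have hns : n - 1 + 1 = n := by omega
    have htn : n - 1 < n := by omega
    have htraj := run_traj (x := x) (y := y) hn (n-1) htn
    have hRv : Valid n (Pt.ret (cnt n x y (n-1)) (eb n x y (n-1))) := by
      show cnt n x y (n-1) < n + 2
      have := cnt_le (n := n) (x := x) (y := y) (n-1)
      omega
    by_cases hp : (n-1) % 2 = 0
    · -- last pass is received by Bob
      rw [if_pos hp] at htraj
      have hbstep := step_port_bob (x := x) (y := y) hp htn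
      rw [hns, if_neg (lt_irrefl n)] at hbstep
      by_cases hvv : decide ((n+1)/2 ≤ cnt n x y n) = true
      · rw [hMAJ, hvv, if_pos rfl]
        rw [if_neg (by rw [hvv]; simp)] at hbstep
        refine iterate_fix hfixB (k := (n-1)+1) (by omega) ?_
        rw [Function.iterate_succ_apply', htraj,
          ghStep_atBob_none (bobFun_eq_none rfl (valid_port (n-1) htn) (port_ne_tap (n-1)) hbstep)]
      · have hvf : decide ((n+1)/2 ≤ cnt n x y n) = false := by
          revert hvv; cases decide ((n+1)/2 ≤ cnt n x y n) <;> simp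
        rw [hMAJ, hvf, if_neg (by simp)]
        rw [if_pos hvf] at hbstep
        refine iterate_fix hfixA (k := (n-1)+2) (by omega) ?_
        have h1 : (ghStep (aliceFun n x) (bobFun n y))^[(n-1)+1] (ghStart (aliceFun n x)) =
            GHState.atAlice ⟨encP n (Pt.ret (cnt n x y (n-1)) (eb n x y (n-1))),
              encP_lt n hRv (fun hh => Pt.noConfusion hh)⟩ := by
          rw [Function.iterate_succ_apply', htraj,
            ghStep_atBob_some (bobFun_eq_some rfl (valid_port (n-1) htn) (port_ne_tap (n-1))
              hbstep (fun hh => Pt.noConfusion hh) hRv (fun hh => Pt.noConfusion hh))]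
        rw [show (n-1)+2 = ((n-1)+1)+1 from rfl, Function.iterate_succ_apply', h1,
          ghStep_atAlice_none (aliceFun_eq_none
            (by rw [Fin.val_succ, encV_ne_tap n (fun hh => Pt.noConfusion hh)]) hRv
            (step_ret_alice_self hp hn _ _))]
    · -- last pass is received by Alice
      rw [if_neg hp] at htraj
      have hastep := step_port_alice (x := x) (y := y) (show (n-1) % 2 = 1 by omega) htn
      rw [hns, if_neg (lt_irrefl n)] at hastep
      by_cases hvv : decide ((n+1)/2 ≤ cnt n x y n) = true
      · rw [hMAJ, hvv, if_pos rfl]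
        rw [if_pos hvv] at hastep
        refine iterate_fix hfixB (k := (n-1)+2) (by omega) ?_
        have h1 : (ghStep (aliceFun n x) (bobFun n y))^[(n-1)+1] (ghStart (aliceFun n x)) =
            GHState.atBob ⟨encP n (Pt.ret (cnt n x y (n-1)) (eb n x y (n-1))),
              encP_lt n hRv (fun hh => Pt.noConfusion hh)⟩ := by
          rw [Function.iterate_succ_apply', htraj,
            ghStep_atAlice_some (aliceFun_eq_some'
              (by rw [Fin.val_succ, encV_ne_tap n (port_ne_tap (n-1))]) (valid_port (n-1) htn)
              hastep (fun hh => Pt.noConfusion hh) hRv (fun hh => Pt.noConfusion hh))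
              (toPipe_succ _ _ (by have := encP_lt n hRv (fun hh => Pt.noConfusion hh); omega))]
        rw [show (n-1)+2 = ((n-1)+1)+1 from rfl, Function.iterate_succ_apply', h1,
          ghStep_atBob_none (bobFun_eq_none rfl hRv (fun hh => Pt.noConfusion hh)
            (step_ret_bob_self (show (n-1) % 2 = 1 by omega) _ _))]
      · have hvf : decide ((n+1)/2 ≤ cnt n x y n) = false := by
          revert hvv; cases decide ((n+1)/2 ≤ cnt n x y n) <;> simp
        rw [hMAJ, hvf, if_neg (by simp)]
        rw [if_neg (by rw [hvf]; simp)] at hastep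
        refine iterate_fix hfixA (k := (n-1)+1) (by omega) ?_
        rw [Function.iterate_succ_apply', htraj,
          ghStep_atAlice_none (aliceFun_eq_none
            (by rw [Fin.val_succ, encV_ne_tap n (port_ne_tap (n-1))]) (valid_port (n-1) htn)
            hastep)]

end GHMaj

/-- The majority function can be computed in the garden-hose model with
`(n + 2)²` pipes: `GH(MAJ) ≤ (n + 2)²`. -/
theorem gh_maj_upper_bound (n : ℕ) :
    (∃ G : GHGame n ((n + 2) ^ 2), G.Computes (MAJfun n)) ∧
      GH (MAJfun n) ≤ (n + 2) ^ 2 := by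
  refine ⟨⟨GHMaj.theGame n, GHMaj.theGame_computes n⟩, ?_⟩
  exact Nat.sInf_le ⟨GHMaj.theGame n, GHMaj.theGame_computes n⟩
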